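/- For every natural number n ≥ 3, as i → ∞ over the natural numbers, i^(-2) · ∫₀^{i^(2/(n+2))} r^(n+1) (1 + cos(2 i r²)) dr converges to 1/(n+2). -/

import Mathlib

lemma osc_cos_bound (n : ℕ) (hn : 3 ≤ n) (I R : ℝ) (hI : 1 ≤ I) (hR : 0 ≤ R) :
    |∫ r in (0:ℝ)..R, r ^ (n + 1) * Real.cos (2 * I * r ^ 2)| ≤
      ((n : ℝ) + 1) * R ^ n / (4 * I) := by
  have hI0 : (0:ℝ) < I := lt_of_lt_of_le one_pos hI
  have hderiv : ∀ r ∈ Set.uIcc (0:ℝ) R,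
      HasDerivAt (fun x : ℝ => x ^ n * Real.sin (2 * I * x ^ 2))
        ((n : ℝ) * r ^ (n - 1) * Real.sin (2 * I * r ^ 2)
          + 4 * I * (r ^ (n + 1) * Real.cos (2 * I * r ^ 2))) r := by
    intro r _
    have h2 : HasDerivAt (fun x : ℝ => 2 * I * x ^ 2) (2 * I * (2 * r)) r := by
      simpa using (hasDerivAt_pow 2 r).const_mul (2 * I)
    have h3 := (Real.hasDerivAt_sin (2 * I * r ^ 2)).comp r h2
    have h : HasDerivAt (fun x : ℝ => x ^ n * Real.sin (2 * I * x ^ 2))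
        ((n : ℝ) * r ^ (n - 1) * Real.sin (2 * I * r ^ 2)
          + r ^ n * (Real.cos (2 * I * r ^ 2) * (2 * I * (2 * r)))) r :=
      (hasDerivAt_pow n r).mul h3
    convert h using 1
    ring
  have cont : Continuous fun r : ℝ =>
      (n : ℝ) * r ^ (n - 1) * Real.sin (2 * I * r ^ 2)
        + 4 * I * (r ^ (n + 1) * Real.cos (2 * I * r ^ 2)) := by fun_prop
  have hint := intervalIntegral.integral_eq_sub_of_hasDerivAt hderiv
    (cont.intervalIntegrable 0 R)
  have i1 : IntervalIntegrable (fun r : ℝ => (n:ℝ) * r ^ (n-1) * Real.sin (2*I*r^2))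
      MeasureTheory.volume 0 R := by
    apply Continuous.intervalIntegrable; fun_prop
  have i2 : IntervalIntegrable (fun r : ℝ => 4 * I * (r ^ (n+1) * Real.cos (2*I*r^2)))
      MeasureTheory.volume 0 R := by
    apply Continuous.intervalIntegrable; fun_prop
  rw [intervalIntegral.integral_add i1 i2, intervalIntegral.integral_const_mul] at hint
  have hn0 : n ≠ 0 := by omega
  rw [zero_pow hn0] at hint
  set S := ∫ x in (0:ℝ)..R, (n:ℝ) * x ^ (n-1) * Real.sin (2*I*x^2) with hSdef
  set C := ∫ r in (0:ℝ)..R, r ^ (n + 1) * Real.cos (2 * I * r ^ 2) with hCdef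
  have hS : |S| ≤ (n:ℝ) * R ^ n := by
    have key : ∀ x ∈ Set.uIoc (0:ℝ) R,
        ‖(n:ℝ) * x ^ (n-1) * Real.sin (2*I*x^2)‖ ≤ (n:ℝ) * R ^ (n-1) := by
      intro x hx
      rw [Set.uIoc_of_le hR] at hx
      have hx0 : (0:ℝ) ≤ x := le_of_lt hx.1
      have hp : x ^ (n-1) ≤ R ^ (n-1) := pow_le_pow_left₀ hx0 hx.2 _
      have habs : |Real.sin (2*I*x^2)| ≤ 1 :=
        abs_le.2 ⟨Real.neg_one_le_sin _, Real.sin_le_one _⟩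
      rw [Real.norm_eq_abs, abs_mul, abs_mul, Nat.abs_cast,
        abs_of_nonneg (pow_nonneg hx0 _)]
      have hxn : (0:ℝ) ≤ x ^ (n-1) := pow_nonneg hx0 _
      have hnn : (0:ℝ) ≤ (n:ℝ) := Nat.cast_nonneg n
      have e1 := mul_le_mul_of_nonneg_left habs
        (by positivity : (0:ℝ) ≤ (n:ℝ) * x ^ (n-1))
      have e2 := mul_le_mul_of_nonneg_left hp hnn
      rw [mul_one] at e1
      calc (n:ℝ) * x ^ (n-1) * |Real.sin (2*I*x^2)| ≤ (n:ℝ) * x ^ (n-1) := e1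
      _ ≤ (n:ℝ) * R ^ (n-1) := e2
    have h1 := intervalIntegral.norm_integral_le_of_norm_le_const key
    rw [← hSdef] at h1
    have h2 : ((n:ℝ) * R ^ (n-1)) * |R - 0| = (n:ℝ) * R ^ n := by
      rw [sub_zero, abs_of_nonneg hR]
      have : R ^ (n-1) * R = R ^ n := by
        rw [← pow_succ]; congr 1; omega
      nlinarith [this]
    rw [Real.norm_eq_abs] at h1
    linarith [h1, h2.le, h2.ge]
  have hRsin : |R ^ n * Real.sin (2*I*R^2)| ≤ R ^ n := by
    rw [abs_mul, abs_of_nonneg (pow_nonneg hR n)]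
    have habs : |Real.sin (2*I*R^2)| ≤ 1 :=
      abs_le.2 ⟨Real.neg_one_le_sin _, Real.sin_le_one _⟩
    nlinarith [pow_nonneg hR n]
  have hC : C = (R ^ n * Real.sin (2*I*R^2) - S) / (4 * I) := by
    rw [eq_div_iff (by positivity)]
    linarith
  rw [hC, abs_div, abs_of_pos (by positivity : (0:ℝ) < 4 * I)]
  have htri : |R ^ n * Real.sin (2*I*R^2) - S| ≤ ((n:ℝ)+1) * R ^ n := by
    calc |R ^ n * Real.sin (2*I*R^2) - S| ≤ |R ^ n * Real.sin (2*I*R^2)| + |S| := abs_sub _ _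
    _ ≤ ((n:ℝ)+1) * R ^ n := by nlinarith
  gcongr

open Filter in
/-- Limit of `i⁻² ∫₀^{i^(2/(n+2))} r^(n+1) (1 + cos(2 i r²)) dr`. -/
theorem growing_ball_oscillatory_limit
    (n : ℕ) (hn : 3 ≤ n) :
    Tendsto
      (fun i : ℕ =>
        ((i : ℝ) ^ 2)⁻¹ *
          ∫ r in (0 : ℝ)..((i : ℝ) ^ ((2 : ℝ) / ((n : ℝ) + 2))),
            r ^ (n + 1) * (1 + Real.cos (2 * (i : ℝ) * r ^ 2)))
      atTop (nhds (1 / ((n : ℝ) + 2))) := by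
  have h2 : (0:ℝ) < (n:ℝ) + 2 := by positivity
  set R : ℕ → ℝ := fun i => (i : ℝ) ^ ((2 : ℝ) / ((n : ℝ) + 2)) with hRdef
  set g : ℕ → ℝ := fun i =>
    ((i : ℝ) ^ 2)⁻¹ * ∫ r in (0:ℝ)..(R i), r ^ (n + 1) * Real.cos (2 * (i:ℝ) * r ^ 2)
    with hgdef
  -- decomposition, valid for i ≥ 1
  have hdecomp : ∀ i : ℕ, 1 ≤ i →
      ((i : ℝ) ^ 2)⁻¹ *
        (∫ r in (0 : ℝ)..(R i), r ^ (n + 1) * (1 + Real.cos (2 * (i : ℝ) * r ^ 2)))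
      = 1 / ((n : ℝ) + 2) + g i := by
    intro i hi
    have hIpos : (0:ℝ) < (i:ℝ) := by exact_mod_cast Nat.pos_of_ne_zero (by omega)
    have hR0 : (0:ℝ) ≤ R i := Real.rpow_nonneg hIpos.le _
    have ia : IntervalIntegrable (fun r : ℝ => r ^ (n+1)) MeasureTheory.volume 0 (R i) := by
      apply Continuous.intervalIntegrable; fun_prop
    have ib : IntervalIntegrable (fun r : ℝ => r ^ (n+1) * Real.cos (2 * (i:ℝ) * r ^ 2))
        MeasureTheory.volume 0 (R i) := by
      apply Continuous.intervalIntegrable; fun_prop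
    have hsplit : (∫ r in (0 : ℝ)..(R i), r ^ (n + 1) * (1 + Real.cos (2 * (i : ℝ) * r ^ 2)))
        = (∫ r in (0:ℝ)..(R i), r ^ (n+1))
          + ∫ r in (0:ℝ)..(R i), r ^ (n+1) * Real.cos (2 * (i:ℝ) * r ^ 2) := by
      rw [← intervalIntegral.integral_add ia ib]
      apply intervalIntegral.integral_congr
      intro r _
      ring
    have hpow : (∫ r in (0:ℝ)..(R i), r ^ (n+1)) = (R i) ^ (n+2) / ((n:ℝ) + 2) := by
      rw [integral_pow]
      rw [zero_pow (by omega : n+1+1 ≠ 0)]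
      push_cast
      ring_nf
    have hRn2 : (R i) ^ (n+2) = (i:ℝ) ^ 2 := by
      rw [hRdef]
      rw [← Real.rpow_natCast ((i:ℝ) ^ ((2:ℝ)/((n:ℝ)+2))) (n+2),
        ← Real.rpow_mul hIpos.le]
      have he : (2:ℝ) / ((n:ℝ)+2) * (((n+2 : ℕ)) : ℝ) = 2 := by
        push_cast
        field_simp
      rw [he]
      rw [show ((2:ℝ)) = (((2:ℕ)):ℝ) by norm_num, Real.rpow_natCast]
    rw [hsplit, hpow, hRn2, hgdef, mul_add]
    congr 1
    have hi2 : ((i:ℝ)^2) ≠ 0 := by positivity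
    field_simp
  -- the oscillatory part tends to 0
  have hgto : Tendsto g atTop (nhds 0) := by
    have hexp : 2*(n:ℝ)/((n:ℝ)+2) - 3 < 0 := by
      rw [sub_neg, div_lt_iff₀ h2]
      have : (0:ℝ) ≤ (n:ℝ) := Nat.cast_nonneg n
      linarith
    have hb : Tendsto (fun i : ℕ =>
        (((n:ℝ)+1)/4) * (i:ℝ) ^ (2*(n:ℝ)/((n:ℝ)+2) - 3)) atTop (nhds 0) := by
      have h0 : Tendsto (fun x : ℝ => x ^ (2*(n:ℝ)/((n:ℝ)+2) - 3)) atTop (nhds 0) := by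
        have := tendsto_rpow_neg_atTop (y := -(2*(n:ℝ)/((n:ℝ)+2) - 3)) (by linarith)
        simpa using this
      have h1 := (h0.comp tendsto_natCast_atTop_atTop).const_mul (((n:ℝ)+1)/4)
      simpa using h1
    apply squeeze_zero_norm' _ hb
    filter_upwards [eventually_ge_atTop 1] with i hi
    have hIpos : (0:ℝ) < (i:ℝ) := by exact_mod_cast Nat.pos_of_ne_zero (by omega)
    have hI1 : (1:ℝ) ≤ (i:ℝ) := by exact_mod_cast hi
    have hR0 : (0:ℝ) ≤ R i := Real.rpow_nonneg hIpos.le _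
    have hbound := osc_cos_bound n hn (i:ℝ) (R i) hI1 hR0
    have hRn : (R i) ^ n = (i:ℝ) ^ (2*(n:ℝ)/((n:ℝ)+2)) := by
      rw [hRdef]
      rw [← Real.rpow_natCast ((i:ℝ) ^ ((2:ℝ)/((n:ℝ)+2))) n, ← Real.rpow_mul hIpos.le]
      congr 1
      field_simp
    have heq : ((i:ℝ)^2)⁻¹ * (((n:ℝ)+1) * (R i) ^ n / (4 * (i:ℝ)))
        = (((n:ℝ)+1)/4) * (i:ℝ) ^ (2*(n:ℝ)/((n:ℝ)+2) - 3) := by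
      rw [hRn, Real.rpow_sub hIpos, show ((3:ℝ)) = (((3:ℕ)):ℝ) by norm_num,
        Real.rpow_natCast]
      field_simp
    rw [hgdef]
    simp only [Real.norm_eq_abs, abs_mul]
    rw [abs_of_nonneg (by positivity : (0:ℝ) ≤ ((i:ℝ)^2)⁻¹)]
    calc ((i:ℝ)^2)⁻¹ * |∫ r in (0:ℝ)..(R i), r ^ (n + 1) * Real.cos (2 * (i:ℝ) * r ^ 2)|
        ≤ ((i:ℝ)^2)⁻¹ * (((n:ℝ)+1) * (R i) ^ n / (4 * (i:ℝ))) := by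
          apply mul_le_mul_of_nonneg_left hbound (by positivity)
      _ = (((n:ℝ)+1)/4) * (i:ℝ) ^ (2*(n:ℝ)/((n:ℝ)+2) - 3) := heq
  -- combine
  have hlim : Tendsto (fun i : ℕ => 1 / ((n:ℝ)+2) + g i) atTop (nhds (1 / ((n:ℝ)+2))) := by
    have := hgto.const_add (1 / ((n:ℝ)+2))
    simpa using this
  apply hlim.congr'
  filter_upwards [eventually_ge_atTop 1] with i hi
  exact (hdecomp i hi).symm
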